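/- The number of lattice paths from (0,0) to (2n,0) with steps (1,1) and (1,-1) having exactly 2k steps strictly below the x-axis equals the n-th Catalan number C_n, for every k with 0 ≤ k ≤ n (Chung–Feller theorem). -/

import Mathlib

/-- The value (+1 or -1) of a step: `true` is an up-step, `false` a down-step. -/
def stepVal (b : Bool) : ℤ := if b then 1 else -1

/-- Partial sum (height) after the first `p` steps. -/
def psum {m : ℕ} (f : Fin m → Bool) (p : ℕ) : ℤ :=
  (((List.ofFn f).take p).map stepVal).sum

/-- The set of steps of the path that lie below the x-axis:
step `i` goes from height `psum f i` to `psum f (i+1)`, and is below the axis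
iff the smaller of these two heights is negative. -/
def belowSteps {m : ℕ} (f : Fin m → Bool) : Finset (Fin m) :=
  Finset.univ.filter fun i => min (psum f i.1) (psum f (i.1 + 1)) < 0

namespace CF

def hsum (l : List Bool) : ℤ := (l.map stepVal).sum

def psumL (l : List Bool) (p : ℕ) : ℤ := hsum (l.take p)

def negCt : ℤ → List Bool → ℕ
  | _, [] => 0
  | h, b :: t => (if min h (h + stepVal b) < 0 then 1 else 0) + negCt (h + stepVal b) t

def NP : ℤ → List Bool → Prop
  | h, [] => h ≤ 0
  | h, b :: t => h ≤ 0 ∧ NP (h + stepVal b) t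

def NN : ℤ → List Bool → Prop
  | h, [] => 0 ≤ h
  | h, b :: t => 0 ≤ h ∧ NN (h + stepVal b) t

@[simp] lemma hsum_nil : hsum [] = 0 := rfl
@[simp] lemma hsum_cons (b : Bool) (t : List Bool) : hsum (b :: t) = stepVal b + hsum t := by
  simp [hsum]
@[simp] lemma hsum_append (a b : List Bool) : hsum (a ++ b) = hsum a + hsum b := by
  simp [hsum]

@[simp] lemma psumL_zero (l : List Bool) : psumL l 0 = 0 := rfl
@[simp] lemma psumL_nil (p : ℕ) : psumL [] p = 0 := by simp [psumL, hsum]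

lemma psumL_cons_succ (b : Bool) (t : List Bool) (p : ℕ) :
    psumL (b :: t) (p + 1) = stepVal b + psumL t p := by
  simp [psumL, List.take_succ_cons]

lemma psumL_of_length_le (l : List Bool) {p : ℕ} (h : l.length ≤ p) : psumL l p = hsum l := by
  simp [psumL, List.take_of_length_le h]

lemma psumL_prefix (a b : List Bool) {p : ℕ} (h : p ≤ a.length) :
    psumL (a ++ b) p = psumL a p := by
  simp [psumL, List.take_append, Nat.sub_eq_zero_of_le h]

lemma psumL_append (a b : List Bool) (q : ℕ) :
    psumL (a ++ b) (a.length + q) = hsum a + psumL b q := by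
  simp [psumL, List.take_append, List.take_of_length_le (Nat.le_add_right _ _)]

lemma psumL_succ (l : List Bool) {j : ℕ} (h : j < l.length) :
    psumL l (j + 1) = psumL l j + stepVal (l.get ⟨j, h⟩) := by
  have h' : j < (List.map stepVal l).length := by simpa using h
  unfold psumL hsum
  rw [List.map_take, List.map_take, List.take_succ, List.getElem?_eq_getElem h']
  simp

lemma NP_iff (h : ℤ) (l : List Bool) : NP h l ↔ ∀ p, h + psumL l p ≤ 0 := by
  induction l generalizing h with
  | nil => simp [NP]
    
  | cons b t ih =>
    constructor
    · rintro ⟨h0, ht⟩ p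
      cases p with
      | zero => simpa using h0
      | succ q =>
        rw [psumL_cons_succ]
        have := (ih _).1 ht q
        omega
    · intro hp
      refine ⟨by simpa using hp 0, (ih _).2 fun q => ?_⟩
      have := hp (q + 1)
      rw [psumL_cons_succ] at this
      omega

lemma NN_iff (h : ℤ) (l : List Bool) : NN h l ↔ ∀ p, 0 ≤ h + psumL l p := by
  induction l generalizing h with
  | nil => simp [NN]
  | cons b t ih =>
    constructor
    · rintro ⟨h0, ht⟩ p
      cases p with
      | zero => simpa using h0
      | succ q =>
        rw [psumL_cons_succ]
        have := (ih _).1 ht q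
        omega
    · intro hp
      refine ⟨by simpa using hp 0, (ih _).2 fun q => ?_⟩
      have := hp (q + 1)
      rw [psumL_cons_succ] at this
      omega

lemma NP.mono {h h' : ℤ} {l : List Bool} (hh : h' ≤ h) (hl : NP h l) : NP h' l := by
  rw [NP_iff] at *
  intro p; have := hl p; omega

lemma NN.mono {h h' : ℤ} {l : List Bool} (hh : h ≤ h') (hl : NN h l) : NN h' l := by
  rw [NN_iff] at *
  intro p; have := hl p; omega

lemma negCt_append (h : ℤ) (a b : List Bool) :
    negCt h (a ++ b) = negCt h a + negCt (h + hsum a) b := by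
  induction a generalizing h with
  | nil => simp [negCt]
  | cons c t ih => simp [negCt, ih, add_assoc]

lemma NP.negCt_eq_length {h : ℤ} {l : List Bool} (hl : NP h l) : negCt h l = l.length := by
  induction l generalizing h with
  | nil => simp [negCt]
  | cons b t ih =>
    obtain ⟨h0, ht⟩ := hl
    have h1 : h + stepVal b ≤ 0 := by
      rw [NP_iff] at ht; simpa using ht 0
    have : min h (h + stepVal b) < 0 := by
      cases b <;> simp [stepVal] at * <;> omega
    simp [negCt, this, ih ht, Nat.add_comm]

lemma NN.negCt_eq_zero {h : ℤ} {l : List Bool} (hl : NN h l) : negCt h l = 0 := by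
  induction l generalizing h with
  | nil => simp [negCt]
  | cons b t ih =>
    obtain ⟨h0, ht⟩ := hl
    have h1 : 0 ≤ h + stepVal b := by
      rw [NN_iff] at ht; simpa using ht 0
    have : ¬ (min h (h + stepVal b) < 0) := by omega
    simp [negCt, this, ih ht]

def dep (h : ℤ) : ℤ := if h < 0 then -h else 0

lemma negCt_parity (l : List Bool) (h : ℤ) :
    ((negCt h l : ℤ) + dep h - dep (h + hsum l)) % 2 = 0 := by
  induction l generalizing h with
  | nil => simp [negCt, dep]
  | cons b t ih =>
    have h2 := ih (h + stepVal b)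
    cases b <;>
      simp only [negCt, hsum_cons, stepVal, if_true, if_false, dep] at h2 ⊢ <;>
      split_ifs at h2 ⊢ <;> push_cast at h2 ⊢ <;> omega

lemma even_negCt {l : List Bool} (h0 : hsum l = 0) : Even (negCt 0 l) := by
  have h2 : ((negCt 0 l : ℤ) + dep 0 - dep (0 + hsum l)) % 2 = 0 := negCt_parity l 0
  rw [h0] at h2
  simp [dep] at h2
  rw [Nat.even_iff]
  omega

@[simp] lemma stepVal_not (b : Bool) : stepVal (!b) = - stepVal b := by
  cases b <;> simp [stepVal]

@[simp] lemma hsum_map_not (l : List Bool) : hsum (l.map not) = - hsum l := by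
  induction l with
  | nil => simp
  | cons b t ih => simp [ih]; ring

@[simp] lemma psumL_map_not (l : List Bool) (p : ℕ) : psumL (l.map not) p = - psumL l p := by
  unfold psumL
  rw [← List.map_take, hsum_map_not]

lemma NN_map_not {h : ℤ} {l : List Bool} (hl : NP h l) : NN (-h) (l.map not) := by
  induction l generalizing h with
  | nil => simpa [NN, NP] using hl
  | cons b t ih =>
    obtain ⟨h0, ht⟩ := hl
    exact ⟨by omega, by
      rw [stepVal_not, show -h + -stepVal b = -(h + stepVal b) from by ring]
      exact ih ht⟩

lemma NP_map_not {h : ℤ} {l : List Bool} (hl : NN h l) : NP (-h) (l.map not) := by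
  induction l generalizing h with
  | nil => simpa [NN, NP] using hl
  | cons b t ih =>
    obtain ⟨h0, ht⟩ := hl
    exact ⟨by omega, by
      rw [stepVal_not, show -h + -stepVal b = -(h + stepVal b) from by ring]
      exact ih ht⟩

@[simp] lemma map_not_not (l : List Bool) : (l.map not).map not = l := by
  simp [List.map_map, Function.comp_def]

lemma psumL_take (l : List Bool) (j p : ℕ) : psumL (l.take j) p = psumL l (min p j) := by
  simp [psumL, List.take_take]

lemma exists_dec1 (l : List Bool) (h0 : hsum l = 0) (hp : ∃ p, 0 < psumL l p) :
    ∃ N A B, NP 0 N ∧ hsum N = 0 ∧ NN 0 A ∧ hsum A = 0 ∧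
      l = N ++ true :: (A ++ false :: B) := by
  classical
  set m := Nat.find hp with hmdef
  have hm : 0 < psumL l m := Nat.find_spec hp
  have hmin : ∀ q < m, psumL l q ≤ 0 := fun q hq => by
    have := Nat.find_min hp hq; omega
  have hm0 : m ≠ 0 := by
    intro h; rw [h] at hm; simp at hm
  obtain ⟨j, hjm⟩ : ∃ j, m = j + 1 := ⟨m - 1, by omega⟩
  rw [hjm] at hm
  have hjlen : j < l.length := by
    by_contra hge
    push_neg at hge
    rw [psumL_of_length_le l (by omega), h0] at hm
    exact absurd hm (by omega)
  have hjle : psumL l j ≤ 0 := hmin j (by omega)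
  have hstep := psumL_succ l hjlen
  have hgt : l.get ⟨j, hjlen⟩ = true := by
    rcases hv : l.get ⟨j, hjlen⟩ with _ | _
    · rw [hv] at hstep; simp [stepVal] at hstep; omega
    · rfl
  have hj0 : psumL l j = 0 := by
    rw [hgt] at hstep; simp [stepVal] at hstep; omega
  set rest := l.drop (j + 1) with hrest
  have hsplit : l = l.take j ++ true :: rest := by
    conv_lhs => rw [← List.take_append_drop j l]
    congr 1
    rw [List.drop_eq_getElem_cons hjlen]
    simp only [List.get_eq_getElem] at hgt
    rw [hgt]
  have hsN : hsum (l.take j) = psumL l j := rfl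
  have hNP : NP 0 (l.take j) := by
    rw [NP_iff]
    intro p
    rw [psumL_take]
    have := hmin (min p j) (by omega)
    omega
  -- second cut
  have hrsum : hsum rest = -1 := by
    have := congrArg hsum hsplit
    simp [hsN, hj0, stepVal] at this
    omega
  have hp2 : ∃ q, psumL rest q ≤ -1 := by
    exact ⟨rest.length, by rw [psumL_of_length_le rest le_rfl, hrsum]⟩
  set m' := Nat.find hp2 with hm'def
  have hm' : psumL rest m' ≤ -1 := Nat.find_spec hp2
  have hmin' : ∀ q < m', 0 ≤ psumL rest q := fun q hq => by
    have := Nat.find_min hp2 hq; omega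
  have hm'0 : m' ≠ 0 := by
    intro h; rw [h] at hm'; simp at hm'
  obtain ⟨p, hpm⟩ : ∃ p, m' = p + 1 := ⟨m' - 1, by omega⟩
  have hplen : p < rest.length := by
    by_contra hge
    push_neg at hge
    have := hmin' p (by omega)
    rw [psumL_of_length_le rest hge, hrsum] at this
    omega
  have hple : 0 ≤ psumL rest p := hmin' p (by omega)
  have hstep' := psumL_succ rest hplen
  rw [hpm] at hm'
  have hgf : rest.get ⟨p, hplen⟩ = false := by
    rcases hv : rest.get ⟨p, hplen⟩ with _ | _
    · rfl
    · rw [hv] at hstep'; simp [stepVal] at hstep'; omega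
  have hp0 : psumL rest p = 0 := by
    rw [hgf] at hstep'; simp [stepVal] at hstep'; omega
  have hsplit' : rest = rest.take p ++ false :: rest.drop (p + 1) := by
    conv_lhs => rw [← List.take_append_drop p rest]
    congr 1
    rw [List.drop_eq_getElem_cons hplen]
    simp only [List.get_eq_getElem] at hgf
    rw [hgf]
  refine ⟨l.take j, rest.take p, rest.drop (p + 1), hNP, by rw [hsN, hj0], ?_, ?_, ?_⟩
  · rw [NN_iff]
    intro q
    rw [psumL_take]
    have := hmin' (min q p) (by omega)
    omega
  · show hsum (rest.take p) = 0
    have : hsum (rest.take p) = psumL rest p := rfl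
    rw [this, hp0]
  · rw [← hsplit']; exact hsplit

lemma exists_dec2 (l : List Bool) (h0 : hsum l = 0) (hp : ∃ p, psumL l p < 0) :
    ∃ A N B, NN 0 A ∧ hsum A = 0 ∧ NP 0 N ∧ hsum N = 0 ∧
      l = A ++ false :: (N ++ true :: B) := by
  obtain ⟨N', A', B', hN', hsN', hA', hsA', heq⟩ :=
    exists_dec1 (l.map not) (by simp [h0])
      (by obtain ⟨p, hp⟩ := hp; exact ⟨p, by simp; omega⟩)
  refine ⟨N'.map not, A'.map not, B'.map not, by simpa using NN_map_not hN',
    by simp [hsN'], by simpa using NP_map_not hA', by simp [hsA'], ?_⟩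
  have := congrArg (List.map not) heq
  simpa [List.map_map, Function.comp_def] using this

lemma len_le_of_shape {N X N' Y : List Bool} (hsN : hsum N = 0)
    (hN' : NP 0 N') (heq : N ++ true :: X = N' ++ Y) : N'.length ≤ N.length := by
  by_contra hlt
  push_neg at hlt
  have h1 : psumL (N ++ true :: X) (N.length + 1) = 1 := by
    rw [psumL_append, hsN]
    have : psumL (true :: X) 1 = stepVal true + psumL X 0 := psumL_cons_succ _ _ 0
    simp [this, stepVal]
  have h2 : psumL (N' ++ Y) (N.length + 1) = psumL N' (N.length + 1) :=
    psumL_prefix _ _ (by omega)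
  have h3 := (NP_iff 0 N').1 hN' (N.length + 1)
  rw [heq, h2] at h1
  omega

lemma len_le_of_shape' {A X A' Y : List Bool} (hsA : hsum A = 0)
    (hA' : NN 0 A') (heq : A ++ false :: X = A' ++ Y) : A'.length ≤ A.length := by
  by_contra hlt
  push_neg at hlt
  have h1 : psumL (A ++ false :: X) (A.length + 1) = -1 := by
    rw [psumL_append, hsA]
    have : psumL (false :: X) 1 = stepVal false + psumL X 0 := psumL_cons_succ _ _ 0
    simp [this, stepVal]
  have h2 : psumL (A' ++ Y) (A.length + 1) = psumL A' (A.length + 1) :=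
    psumL_prefix _ _ (by omega)
  have h3 := (NN_iff 0 A').1 hA' (A.length + 1)
  rw [heq, h2] at h1
  omega

lemma unique_dec1 {N A B N' A' B' : List Bool}
    (hsN : hsum N = 0) (hA : NN 0 A) (hsA : hsum A = 0)
    (hN' : NP 0 N') (hsN' : hsum N' = 0) (hA' : NN 0 A') (hsA' : hsum A' = 0) (hN : NP 0 N)
    (heq : N ++ true :: (A ++ false :: B) = N' ++ true :: (A' ++ false :: B')) :
    N = N' ∧ A = A' ∧ B = B' := by
  have l1 : N'.length ≤ N.length := len_le_of_shape hsN hN' heq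
  have l2 : N.length ≤ N'.length := len_le_of_shape hsN' hN heq.symm
  obtain ⟨hNe, htail⟩ := List.append_inj heq (by omega)
  have htail2 : A ++ false :: B = A' ++ false :: B' := by
    simpa using htail
  have l3 : A'.length ≤ A.length := len_le_of_shape' hsA hA' htail2
  have l4 : A.length ≤ A'.length := len_le_of_shape' hsA' hA htail2.symm
  obtain ⟨hAe, htail3⟩ := List.append_inj htail2 (by omega)
  exact ⟨hNe, hAe, by simpa using htail3⟩

lemma unique_dec2 {A N B A' N' B' : List Bool}
    (hsA : hsum A = 0) (hN : NP 0 N) (hsN : hsum N = 0)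
    (hA' : NN 0 A') (hsA' : hsum A' = 0) (hN' : NP 0 N') (hsN' : hsum N' = 0) (hA : NN 0 A)
    (heq : A ++ false :: (N ++ true :: B) = A' ++ false :: (N' ++ true :: B')) :
    A = A' ∧ N = N' ∧ B = B' := by
  have l1 : A'.length ≤ A.length := len_le_of_shape' hsA hA' heq
  have l2 : A.length ≤ A'.length := len_le_of_shape' hsA' hA heq.symm
  obtain ⟨hAe, htail⟩ := List.append_inj heq (by omega)
  have htail2 : N ++ true :: B = N' ++ true :: B' := by
    simpa using htail
  have l3 : N'.length ≤ N.length := len_le_of_shape hsN hN' htail2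
  have l4 : N.length ≤ N'.length := len_le_of_shape hsN' hN htail2.symm
  obtain ⟨hNe, htail3⟩ := List.append_inj htail2 (by omega)
  exact ⟨hAe, hNe, by simpa using htail3⟩

lemma psum_eq {m : ℕ} (f : Fin m → Bool) (p : ℕ) : psum f p = psumL (List.ofFn f) p := rfl

lemma psum_succ {m : ℕ} (f : Fin (m + 1) → Bool) (p : ℕ) :
    psum f (p + 1) = stepVal (f 0) + psum (fun i => f i.succ) p := by
  simp [psum, List.ofFn_succ]

lemma card_below (m : ℕ) (f : Fin m → Bool) (h : ℤ) :
    (Finset.univ.filter fun i : Fin m =>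
      min (h + psum f i.1) (h + psum f (i.1 + 1)) < 0).card = negCt h (List.ofFn f) := by
  induction m generalizing h with
  | zero => simp [negCt, List.ofFn_zero]
  | succ m ih =>
    have hof : List.ofFn f = f 0 :: List.ofFn (fun i => f i.succ) := List.ofFn_succ
    rw [hof]
    show _ = (if min h (h + stepVal (f 0)) < 0 then 1 else 0) +
      negCt (h + stepVal (f 0)) (List.ofFn fun i => f i.succ)
    rw [← ih (fun i => f i.succ) (h + stepVal (f 0))]
    rw [Finset.card_filter, Finset.card_filter, Fin.sum_univ_succ]
    congr 1
    · have h0 : psum f 0 = 0 := rfl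
      have h1 : psum f 1 = stepVal (f 0) := by
        have := psum_succ f 0
        simpa [psum] using this
      norm_num [h0, h1]
    · apply Finset.sum_congr rfl
      intro i _
      have e1 : psum f (i.1 + 1) = stepVal (f 0) + psum (fun i => f i.succ) i.1 := psum_succ f i.1
      have e2 : psum f (i.1 + 1 + 1) = stepVal (f 0) + psum (fun i => f i.succ) (i.1 + 1) :=
        psum_succ f (i.1 + 1)
      simp only [Fin.val_succ, e1, e2, ← add_assoc]

lemma belowSteps_card {m : ℕ} (f : Fin m → Bool) :
    (belowSteps f).card = negCt 0 (List.ofFn f) := by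
  rw [← card_below m f 0]
  unfold belowSteps
  congr 1
  apply Finset.filter_congr
  intro i _
  simp

lemma psum_all {m : ℕ} (f : Fin m → Bool) : psum f m = hsum (List.ofFn f) := by
  rw [psum_eq, psumL_of_length_le]
  simp

lemma hsum_ofFn {m : ℕ} (f : Fin m → Bool) :
    hsum (List.ofFn f) = 2 * ((Finset.univ.filter fun i => f i = true).card : ℤ) - m := by
  unfold hsum
  rw [List.map_ofFn, List.sum_ofFn]
  simp only [Function.comp]
  have : ∀ i : Fin m, stepVal (f i) = 2 * (if f i = true then (1:ℤ) else 0) - 1 := by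
    intro i; cases hf : f i <;> simp [stepVal]
  rw [Finset.sum_congr rfl (fun i _ => this i)]
  rw [Finset.sum_sub_distrib, ← Finset.mul_sum, Finset.sum_boole]
  simp

lemma card_sum_zero (n : ℕ) :
    (Finset.univ.filter fun f : Fin (2 * n) → Bool => psum f (2 * n) = 0).card
      = Nat.centralBinom n := by
  classical
  have key : ∀ f : Fin (2 * n) → Bool,
      psum f (2 * n) = 0 ↔ (Finset.univ.filter fun i => f i = true).card = n := by
    intro f
    rw [psum_all, hsum_ofFn]
    constructor
    · intro h
      have hle : (Finset.univ.filter fun i => f i = true).card ≤ 2 * n := by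
        simpa using Finset.card_filter_le Finset.univ fun i => f i = true
      omega
    · intro h; rw [h]; push_cast; ring
  have hpc : ((Finset.univ : Finset (Fin (2 * n))).powersetCard n).card = Nat.centralBinom n := by
    rw [Finset.card_powersetCard]
    simp [Nat.centralBinom]
  rw [← hpc]
  refine Finset.card_bij' (fun f _ => Finset.univ.filter fun i => f i = true)
    (fun s _ => fun i => decide (i ∈ s)) ?_ ?_ ?_ ?_
  · intro f hf
    rw [Finset.mem_powersetCard]
    exact ⟨Finset.filter_subset _ _, by
      rw [← key f]; exact (Finset.mem_filter.1 hf).2⟩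
  · intro s hs
    rw [Finset.mem_powersetCard] at hs
    simp only [Finset.mem_filter, Finset.mem_univ, true_and]
    rw [key]
    convert hs.2 using 2
    ext i
    simp
  · intro f hf
    funext i
    simp
  · intro s hs
    ext i
    simp

def Shape1 (l N A B : List Bool) : Prop :=
  NP 0 N ∧ hsum N = 0 ∧ NN 0 A ∧ hsum A = 0 ∧ l = N ++ true :: (A ++ false :: B)

def Shape2 (l A N B : List Bool) : Prop :=
  NN 0 A ∧ hsum A = 0 ∧ NP 0 N ∧ hsum N = 0 ∧ l = A ++ false :: (N ++ true :: B)

lemma exists_shape1 (l : List Bool) (h0 : hsum l = 0) (hp : ∃ p, 0 < psumL l p) :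
    ∃ N A B, Shape1 l N A B := exists_dec1 l h0 hp

lemma exists_shape2 (l : List Bool) (h0 : hsum l = 0) (hp : ∃ p, psumL l p < 0) :
    ∃ A N B, Shape2 l A N B := exists_dec2 l h0 hp

noncomputable def d1 (l : List Bool) (h : ∃ N A B, Shape1 l N A B) :
    List Bool × List Bool × List Bool :=
  ⟨h.choose, h.choose_spec.choose, h.choose_spec.choose_spec.choose⟩

lemma d1_spec (l : List Bool) (h : ∃ N A B, Shape1 l N A B) :
    Shape1 l (d1 l h).1 (d1 l h).2.1 (d1 l h).2.2 :=
  h.choose_spec.choose_spec.choose_spec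

noncomputable def d2 (l : List Bool) (h : ∃ A N B, Shape2 l A N B) :
    List Bool × List Bool × List Bool :=
  ⟨h.choose, h.choose_spec.choose, h.choose_spec.choose_spec.choose⟩

lemma d2_spec (l : List Bool) (h : ∃ A N B, Shape2 l A N B) :
    Shape2 l (d2 l h).1 (d2 l h).2.1 (d2 l h).2.2 :=
  h.choose_spec.choose_spec.choose_spec

noncomputable def phiL (l : List Bool) (h : ∃ N A B, Shape1 l N A B) : List Bool :=
  (d1 l h).2.1 ++ false :: ((d1 l h).1 ++ true :: (d1 l h).2.2)

noncomputable def psiL (l : List Bool) (h : ∃ A N B, Shape2 l A N B) : List Bool :=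
  (d2 l h).2.1 ++ true :: ((d2 l h).1 ++ false :: (d2 l h).2.2)

lemma phiL_shape2 (l : List Bool) (h : ∃ N A B, Shape1 l N A B) :
    Shape2 (phiL l h) (d1 l h).2.1 (d1 l h).1 (d1 l h).2.2 := by
  obtain ⟨hN, hsN, hA, hsA, _⟩ := d1_spec l h
  exact ⟨hA, hsA, hN, hsN, rfl⟩

lemma psiL_shape1 (l : List Bool) (h : ∃ A N B, Shape2 l A N B) :
    Shape1 (psiL l h) (d2 l h).2.1 (d2 l h).1 (d2 l h).2.2 := by
  obtain ⟨hA, hsA, hN, hsN, _⟩ := d2_spec l h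
  exact ⟨hN, hsN, hA, hsA, rfl⟩

lemma phiL_length (l : List Bool) (h : ∃ N A B, Shape1 l N A B) :
    (phiL l h).length = l.length := by
  conv_rhs => rw [(d1_spec l h).2.2.2.2]
  simp [phiL]
  omega

lemma psiL_length (l : List Bool) (h : ∃ A N B, Shape2 l A N B) :
    (psiL l h).length = l.length := by
  conv_rhs => rw [(d2_spec l h).2.2.2.2]
  simp [psiL]
  omega

lemma hsum_shape1 {l N A B : List Bool} (hs : Shape1 l N A B) (h0 : hsum l = 0) :
    hsum B = 0 := by
  obtain ⟨_, hsN, _, hsA, rfl⟩ := hs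
  simp [hsN, hsA, stepVal] at h0
  omega

lemma hsum_shape2 {l A N B : List Bool} (hs : Shape2 l A N B) (h0 : hsum l = 0) :
    hsum B = 0 := by
  obtain ⟨_, hsA, _, hsN, rfl⟩ := hs
  simp [hsN, hsA, stepVal] at h0
  omega

lemma negCt_shape1 {N A B : List Bool} (hN : NP 0 N) (hsN : hsum N = 0)
    (hA : NN 0 A) (hsA : hsum A = 0) :
    negCt 0 (N ++ true :: (A ++ false :: B)) = N.length + negCt 0 B := by
  rw [negCt_append, hsN, hN.negCt_eq_length]
  have e1 : negCt (0 + 0) (true :: (A ++ false :: B))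
      = negCt 1 (A ++ false :: B) := by
    simp [negCt, stepVal]
  rw [e1, negCt_append, (hA.mono (by norm_num)).negCt_eq_zero, hsA]
  simp [negCt, stepVal]

lemma negCt_shape2 {A N B : List Bool} (hA : NN 0 A) (hsA : hsum A = 0)
    (hN : NP 0 N) (hsN : hsum N = 0) :
    negCt 0 (A ++ false :: (N ++ true :: B)) = N.length + 2 + negCt 0 B := by
  rw [negCt_append, hA.negCt_eq_zero, hsA]
  have e1 : negCt (0 + 0) (false :: (N ++ true :: B))
      = 1 + negCt (-1) (N ++ true :: B) := by
    simp [negCt, stepVal]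
  rw [e1, negCt_append, (hN.mono (by norm_num)).negCt_eq_length, hsN]
  have e2 : negCt (-1 + 0) (true :: B) = 1 + negCt 0 B := by
    simp [negCt, stepVal]
  rw [e2]
  omega

lemma phiL_negCt (l : List Bool) (h : ∃ N A B, Shape1 l N A B) :
    negCt 0 (phiL l h) = negCt 0 l + 2 := by
  obtain ⟨hN, hsN, hA, hsA, hl⟩ := d1_spec l h
  rw [show phiL l h = (d1 l h).2.1 ++ false :: ((d1 l h).1 ++ true :: (d1 l h).2.2) from rfl,
    negCt_shape2 hA hsA hN hsN]
  conv_rhs => rw [hl]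
  rw [negCt_shape1 hN hsN hA hsA]
  omega

lemma psiL_negCt (l : List Bool) (h : ∃ A N B, Shape2 l A N B) :
    negCt 0 (psiL l h) + 2 = negCt 0 l := by
  obtain ⟨hA, hsA, hN, hsN, hl⟩ := d2_spec l h
  rw [show psiL l h = (d2 l h).2.1 ++ true :: ((d2 l h).1 ++ false :: (d2 l h).2.2) from rfl,
    negCt_shape1 hN hsN hA hsA]
  conv_rhs => rw [hl]
  rw [negCt_shape2 hA hsA hN hsN]
  omega

lemma psiL_phiL (l : List Bool) (h : ∃ N A B, Shape1 l N A B)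
    (h' : ∃ A N B, Shape2 (phiL l h) A N B) : psiL (phiL l h) h' = l := by
  obtain ⟨hN, hsN, hA, hsA, hl⟩ := d1_spec l h
  have s1 := phiL_shape2 l h
  have s2 := d2_spec (phiL l h) h'
  obtain ⟨hA2, hsA2, hN2, hsN2, hl2⟩ := s2
  obtain ⟨e1, e2, e3⟩ := unique_dec2 hsA2 hN2 hsN2 s1.1 s1.2.1 s1.2.2.1 s1.2.2.2.1 hA2
    (hl2.symm.trans s1.2.2.2.2)
  rw [show psiL (phiL l h) h' = (d2 (phiL l h) h').2.1 ++ true :: ((d2 (phiL l h) h').1 ++ false :: (d2 (phiL l h) h').2.2) from rfl, e1, e2, e3]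
  exact hl.symm

lemma phiL_psiL (l : List Bool) (h : ∃ A N B, Shape2 l A N B)
    (h' : ∃ N A B, Shape1 (psiL l h) N A B) : phiL (psiL l h) h' = l := by
  obtain ⟨hA, hsA, hN, hsN, hl⟩ := d2_spec l h
  have s1 := psiL_shape1 l h
  have s2 := d1_spec (psiL l h) h'
  obtain ⟨hN2, hsN2, hA2, hsA2, hl2⟩ := s2
  obtain ⟨e1, e2, e3⟩ := unique_dec1 hsN2 hA2 hsA2 s1.1 s1.2.1 s1.2.2.1 s1.2.2.2.1 hN2
    (hl2.symm.trans s1.2.2.2.2)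
  rw [show phiL (psiL l h) h' = (d1 (psiL l h) h').2.1 ++ false :: ((d1 (psiL l h) h').1 ++ true :: (d1 (psiL l h) h').2.2) from rfl, e1, e2, e3]
  exact hl.symm

lemma phiL_hsum (l : List Bool) (h : ∃ N A B, Shape1 l N A B) :
    hsum (phiL l h) = hsum l := by
  conv_rhs => rw [(d1_spec l h).2.2.2.2]
  simp [phiL, stepVal]
  ring

lemma psiL_hsum (l : List Bool) (h : ∃ A N B, Shape2 l A N B) :
    hsum (psiL l h) = hsum l := by
  conv_rhs => rw [(d2_spec l h).2.2.2.2]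
  simp [psiL, stepVal]
  ring

lemma psiL_congr {x y : List Bool} (e : x = y) (hx : ∃ A N B, Shape2 x A N B)
    (hy : ∃ A N B, Shape2 y A N B) : psiL x hx = psiL y hy := by
  subst e; rfl

lemma phiL_congr {x y : List Bool} (e : x = y) (hx : ∃ N A B, Shape1 x N A B)
    (hy : ∃ N A B, Shape1 y N A B) : phiL x hx = phiL y hy := by
  subst e; rfl

def ofList {m : ℕ} (l : List Bool) (h : l.length = m) : Fin m → Bool :=
  fun i => l.get ⟨i.1, by rw [h]; exact i.2⟩

lemma ofFn_ofList {m : ℕ} (l : List Bool) (h : l.length = m) :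
    List.ofFn (ofList l h) = l := by
  subst h
  exact List.ofFn_get l

lemma ofList_ofFn {m : ℕ} (f : Fin m → Bool) (h : (List.ofFn f).length = m) :
    ofList (List.ofFn f) h = f := by
  funext i
  simp [ofList]

lemma ofList_congr {m : ℕ} {x y : List Bool} (e : x = y) (hx : x.length = m)
    (hy : y.length = m) : ofList x hx = ofList y hy := by
  subst e; rfl

lemma mem_ex1 {n k : ℕ} (hk : k < n) {f : Fin (2 * n) → Bool} (h0 : psum f (2 * n) = 0)
    (hc : (belowSteps f).card = 2 * k) : ∃ N A B, Shape1 (List.ofFn f) N A B := by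
  apply exists_shape1
  · rw [← psum_all]; exact h0
  · by_contra hne
    push_neg at hne
    have hNP : NP 0 (List.ofFn f) := (NP_iff _ _).2 fun p => by have := hne p; omega
    have h1 := hNP.negCt_eq_length
    rw [← belowSteps_card, hc] at h1
    simp at h1
    omega

lemma mem_ex2 {n k : ℕ} {f : Fin (2 * n) → Bool} (h0 : psum f (2 * n) = 0)
    (hc : (belowSteps f).card = 2 * (k + 1)) : ∃ A N B, Shape2 (List.ofFn f) A N B := by
  apply exists_shape2
  · rw [← psum_all]; exact h0
  · by_contra hne
    push_neg at hne
    have hNN : NN 0 (List.ofFn f) := (NN_iff _ _).2 fun p => by have := hne p; omega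
    have h1 := hNN.negCt_eq_zero
    rw [← belowSteps_card, hc] at h1
    omega

lemma step_card (n k : ℕ) (hk : k < n) :
    ((Finset.univ : Finset (Fin (2 * n) → Bool)).filter fun f =>
        psum f (2 * n) = 0 ∧ (belowSteps f).card = 2 * k).card =
    ((Finset.univ : Finset (Fin (2 * n) → Bool)).filter fun f =>
        psum f (2 * n) = 0 ∧ (belowSteps f).card = 2 * (k + 1)).card := by
  classical
  refine Finset.card_bij'
    (fun f hf => ofList
      (phiL (List.ofFn f) (mem_ex1 hk (Finset.mem_filter.1 hf).2.1 (Finset.mem_filter.1 hf).2.2))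
      (by rw [phiL_length]; simp))
    (fun g hg => ofList
      (psiL (List.ofFn g) (mem_ex2 (Finset.mem_filter.1 hg).2.1 (Finset.mem_filter.1 hg).2.2))
      (by rw [psiL_length]; simp)) ?_ ?_ ?_ ?_
  · intro f hf
    obtain ⟨-, h0, hc⟩ := Finset.mem_filter.1 hf
    rw [Finset.mem_filter]
    refine ⟨Finset.mem_univ _, ?_, ?_⟩
    · rw [psum_all, ofFn_ofList, phiL_hsum, ← psum_all]
      exact h0
    · rw [belowSteps_card, ofFn_ofList, phiL_negCt, ← belowSteps_card, hc]
      ring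
  · intro g hg
    obtain ⟨-, h0, hc⟩ := Finset.mem_filter.1 hg
    rw [Finset.mem_filter]
    refine ⟨Finset.mem_univ _, ?_, ?_⟩
    · rw [psum_all, ofFn_ofList, psiL_hsum, ← psum_all]
      exact h0
    · have hx := psiL_negCt (List.ofFn g)
        (mem_ex2 (Finset.mem_filter.1 hg).2.1 (Finset.mem_filter.1 hg).2.2)
      have hb : negCt 0 (List.ofFn g) = 2 * (k + 1) := by
        rw [← belowSteps_card]; exact hc
      rw [hb] at hx
      beta_reduce
      rw [belowSteps_card, ofFn_ofList]
      omega
  · intro f hf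
    have hy : ∃ A N B, Shape2 (phiL (List.ofFn f)
        (mem_ex1 hk (Finset.mem_filter.1 hf).2.1 (Finset.mem_filter.1 hf).2.2)) A N B :=
      ⟨_, _, _, phiL_shape2 _ _⟩
    refine Eq.trans (ofList_congr (Eq.trans (psiL_congr (ofFn_ofList _ _) _ hy)
      (psiL_phiL _ _ hy)) _ (by simp)) (ofList_ofFn f _)
  · intro g hg
    have hy : ∃ N A B, Shape1 (psiL (List.ofFn g)
        (mem_ex2 (Finset.mem_filter.1 hg).2.1 (Finset.mem_filter.1 hg).2.2)) N A B :=
      ⟨_, _, _, psiL_shape1 _ _⟩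
    refine Eq.trans (ofList_congr (Eq.trans (phiL_congr (ofFn_ofList _ _) _ hy)
      (phiL_psiL _ _ hy)) _ (by simp)) (ofList_ofFn g _)

end CF


/-- **Chung–Feller theorem**: the number of paths from (0,0) to (2n,0) with steps
(1,1), (1,-1) having exactly 2k steps strictly below the x-axis is the n-th
Catalan number, for every 0 ≤ k ≤ n. -/
theorem chung_feller (n k : ℕ) (hk : k ≤ n) :
    ((Finset.univ : Finset (Fin (2 * n) → Bool)).filter fun f =>
        psum f (2 * n) = 0 ∧ (belowSteps f).card = 2 * k).card = catalan n := by
  classical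
  open CF in
  have hconst : ∀ j, j ≤ n →
      ((Finset.univ : Finset (Fin (2 * n) → Bool)).filter fun f =>
        psum f (2 * n) = 0 ∧ (belowSteps f).card = 2 * j).card =
      ((Finset.univ : Finset (Fin (2 * n) → Bool)).filter fun f =>
        psum f (2 * n) = 0 ∧ (belowSteps f).card = 2 * 0).card := by
    intro j hj
    induction j with
    | zero => rfl
    | succ i ih => rw [← CF.step_card n i (by omega)]; exact ih (by omega)
  have hsumall : ∑ j ∈ Finset.range (n + 1),
      ((Finset.univ : Finset (Fin (2 * n) → Bool)).filter fun f =>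
        psum f (2 * n) = 0 ∧ (belowSteps f).card = 2 * j).card = Nat.centralBinom n := by
    rw [← CF.card_sum_zero n]
    rw [Finset.card_eq_sum_card_fiberwise
      (f := fun f : Fin (2 * n) → Bool => (belowSteps f).card / 2)
      (t := Finset.range (n + 1)) (fun f hf => by
        rw [Finset.mem_coe, Finset.mem_range]
        show (belowSteps f).card / 2 < n + 1
        have h1 : (belowSteps f).card ≤ 2 * n := by
          have := Finset.card_le_univ (belowSteps f)
          simpa using this
        omega)]
    apply Finset.sum_congr rfl
    intro j hj
    congr 1
    ext f
    simp only [Finset.mem_filter, Finset.mem_univ, true_and]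
    constructor
    · rintro ⟨h0, hc⟩
      refine ⟨h0, ?_⟩
      show (belowSteps f).card / 2 = j
      omega
    · rintro ⟨h0, hdiv⟩
      have hdiv' : (belowSteps f).card / 2 = j := hdiv
      refine ⟨h0, ?_⟩
      have hev : Even ((belowSteps f).card) := by
        rw [CF.belowSteps_card]
        exact CF.even_negCt (by rw [← CF.psum_all]; exact h0)
      obtain ⟨t, ht⟩ := hev
      omega
  have hcb : (n + 1) * ((Finset.univ : Finset (Fin (2 * n) → Bool)).filter fun f =>
      psum f (2 * n) = 0 ∧ (belowSteps f).card = 2 * 0).card = (n + 1) * catalan n := by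
    rw [succ_mul_catalan_eq_centralBinom, ← hsumall]
    rw [Finset.sum_congr rfl fun j hj => hconst j (by
      rw [Finset.mem_range] at hj; omega)]
    simp [Finset.sum_const, Finset.card_range, Nat.mul_comm]
  have h0 : ((Finset.univ : Finset (Fin (2 * n) → Bool)).filter fun f =>
      psum f (2 * n) = 0 ∧ (belowSteps f).card = 2 * 0).card = catalan n :=
    Nat.eq_of_mul_eq_mul_left (by omega) hcb
  rw [hconst k hk, h0]
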